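/- Let t ≥ 1 and let H_t be the rooted tree whose root has three children, each the root of a copy of F_t. With P_t := (1+3x+x^2)^t, Q_t := (2+3x+x^2)^t, R_t := (P_t − (1+x)^t)/x, U_t := (P_t + x·Q_t)^3 and V_t := (Q_t + R_t)^3 − R_t^3, one has 𝒜_{H_t}(x) = x^{3t+1}·U_t, ℬ_{H_t}(x) = x^{3t+3}·V_t, and 𝒞_{H_t}(x) = x^{3t+3}·R_t^3. -/

import Mathlib

open Polynomial

/-- `𝒜_S(x)`: generating polynomial (by cardinality) of subsets `S'` containing the root `ρ`
such that every vertex is in `S'` or adjacent to a member of `S'`. -/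
noncomputable def stateA {V : Type*} [Fintype V] (G : SimpleGraph V) (ρ : V) :
    Polynomial ℤ :=
  ∑ j ∈ Finset.range (Fintype.card V + 1),
    (Nat.card {S : Finset V // S.card = j ∧ ρ ∈ S ∧
      ∀ v, v ∈ S ∨ ∃ u ∈ S, G.Adj u v} : Polynomial ℤ) * Polynomial.X ^ j

/-- `ℬ_S(x)`: generating polynomial of subsets `S'` with `ρ ∉ S'`, `ρ` adjacent to a member
of `S'`, and every vertex other than `ρ` in `S'` or adjacent to a member of `S'`. -/
noncomputable def stateB {V : Type*} [Fintype V] (G : SimpleGraph V) (ρ : V) :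
    Polynomial ℤ :=
  ∑ j ∈ Finset.range (Fintype.card V + 1),
    (Nat.card {S : Finset V // S.card = j ∧ ρ ∉ S ∧ (∃ u ∈ S, G.Adj u ρ) ∧
      ∀ v, v ≠ ρ → (v ∈ S ∨ ∃ u ∈ S, G.Adj u v)} : Polynomial ℤ) * Polynomial.X ^ j

/-- `𝒞_S(x)`: generating polynomial of subsets `S'` with `ρ ∉ S'`, `ρ` not adjacent to any
member of `S'`, and every vertex other than `ρ` in `S'` or adjacent to a member of `S'`. -/
noncomputable def stateC {V : Type*} [Fintype V] (G : SimpleGraph V) (ρ : V) :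
    Polynomial ℤ :=
  ∑ j ∈ Finset.range (Fintype.card V + 1),
    (Nat.card {S : Finset V // S.card = j ∧ ρ ∉ S ∧ (¬ ∃ u ∈ S, G.Adj u ρ) ∧
      ∀ v, v ≠ ρ → (v ∈ S ∨ ∃ u ∈ S, G.Adj u v)} : Polynomial ℤ) * Polynomial.X ^ j

/-- Vertices of the rooted gadget `F_t`: a root together with `t` copies of the rooted
three-vertex path `L`. -/
def FVert (t : ℕ) : Type := Unit ⊕ (Fin t × Fin 3)

instance (t : ℕ) : Fintype (FVert t) := by unfold FVert; infer_instance

/-- Base edge relation of `F_t`: the root is joined to the root (vertex `0`) of each copy of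
`L`, and each copy of `L` carries path edges `0-1-2`. -/
def FRel (t : ℕ) (x y : FVert t) : Prop :=
  (∃ ℓ : Fin t, x = Sum.inl () ∧ y = Sum.inr (ℓ, 0)) ∨
  (∃ (ℓ : Fin t) (a b : Fin 3), (SimpleGraph.pathGraph 3).Adj a b ∧
    x = Sum.inr (ℓ, a) ∧ y = Sum.inr (ℓ, b))

/-- The rooted tree `F_t` (root `Sum.inl ()`). -/
def Ftree (t : ℕ) : SimpleGraph (FVert t) := SimpleGraph.fromRel (FRel t)

/-- Vertices of the rooted gadget `H_t`: a root together with three copies of `F_t`. -/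
def HVert (t : ℕ) : Type := Unit ⊕ (Fin 3 × FVert t)

instance (t : ℕ) : Fintype (HVert t) := by unfold HVert; infer_instance

/-- Base edge relation of `H_t`: the root is joined to the root of each of three copies of
`F_t`, and each copy carries the edges of `F_t`. -/
def HRel (t : ℕ) (x y : HVert t) : Prop :=
  (∃ b : Fin 3, x = Sum.inl () ∧ y = Sum.inr (b, Sum.inl ())) ∨
  (∃ (b : Fin 3) (p q : FVert t), (Ftree t).Adj p q ∧
    x = Sum.inr (b, p) ∧ y = Sum.inr (b, q))

/-- The rooted tree `H_t` (root `Sum.inl ()`). -/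
def Htree (t : ℕ) : SimpleGraph (HVert t) := SimpleGraph.fromRel (HRel t)

/-- `P_t := (1+3x+x^2)^t`. -/
noncomputable def Ppoly (t : ℕ) : Polynomial ℤ := (1 + 3 * X + X ^ 2) ^ t

/-- `Q_t := (2+3x+x^2)^t`. -/
noncomputable def Qpoly (t : ℕ) : Polynomial ℤ := (2 + 3 * X + X ^ 2) ^ t

/-- `R_t := (P_t - (1+x)^t)/x`, a genuine polynomial since `P_t` and `(1+x)^t` have equal
constant terms (here realized as division by the monic polynomial `X`). -/
noncomputable def Rpoly (t : ℕ) : Polynomial ℤ := (Ppoly t - (1 + X) ^ t) /ₘ X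

/-- `U_t := (P_t + x·Q_t)^3`. -/
noncomputable def Upoly (t : ℕ) : Polynomial ℤ := (Ppoly t + X * Qpoly t) ^ 3

/-- `V_t := (Q_t + R_t)^3 - R_t^3`. -/
noncomputable def Vpoly (t : ℕ) : Polynomial ℤ := (Qpoly t + Rpoly t) ^ 3 - Rpoly t ^ 3


section AuxState
open scoped Classical

noncomputable def gen {W : Type*} [Fintype W] (p : Finset W → Prop) : Polynomial ℤ :=
  ∑ T : Finset W, if p T then (X : Polynomial ℤ) ^ T.card else 0

lemma sum_ite_card {V : Type*} [Fintype V] (p : Finset V → Prop) :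
    (∑ j ∈ Finset.range (Fintype.card V + 1),
      (Nat.card {S : Finset V // S.card = j ∧ p S} : Polynomial ℤ) * X ^ j)
    = gen p := by
  rw [gen, ← Finset.sum_fiberwise_of_maps_to (g := fun S : Finset V => S.card)
      (t := Finset.range (Fintype.card V + 1))
      (fun S _ => Finset.mem_range.mpr (Nat.lt_succ_of_le (Finset.card_le_univ S)))
      (fun S => if p S then (X : Polynomial ℤ) ^ S.card else 0)]
  refine Finset.sum_congr rfl fun j hj => ?_
  rw [Finset.sum_congr rfl (fun S hS => by
        rw [(Finset.mem_filter.mp hS).2]),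
      ← Finset.sum_filter, Finset.filter_filter, Finset.sum_const,
      Nat.card_eq_fintype_card, Fintype.card_subtype, nsmul_eq_mul]

lemma stateA_eq {V : Type*} [Fintype V] (G : SimpleGraph V) (ρ : V) :
    stateA G ρ = gen (fun S => ρ ∈ S ∧ ∀ v, v ∈ S ∨ ∃ u ∈ S, G.Adj u v) := by
  rw [stateA]; exact sum_ite_card _

lemma stateB_eq {V : Type*} [Fintype V] (G : SimpleGraph V) (ρ : V) :
    stateB G ρ = gen (fun S => ρ ∉ S ∧ (∃ u ∈ S, G.Adj u ρ) ∧
      ∀ v, v ≠ ρ → (v ∈ S ∨ ∃ u ∈ S, G.Adj u v)) := by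
  rw [stateB]; exact sum_ite_card _

lemma stateC_eq {V : Type*} [Fintype V] (G : SimpleGraph V) (ρ : V) :
    stateC G ρ = gen (fun S => ρ ∉ S ∧ (¬ ∃ u ∈ S, G.Adj u ρ) ∧
      ∀ v, v ≠ ρ → (v ∈ S ∨ ∃ u ∈ S, G.Adj u v)) := by
  rw [stateC]; exact sum_ite_card _

lemma gen_congr {W : Type*} [Fintype W] {p q : Finset W → Prop} (h : ∀ T, p T ↔ q T) :
    gen p = gen q := by
  unfold gen
  exact Finset.sum_congr rfl fun T _ => if_congr (h T) rfl rfl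

lemma gen_or {W : Type*} [Fintype W] {p q : Finset W → Prop} (h : ∀ T, ¬(p T ∧ q T)) :
    gen (fun T => p T ∨ q T) = gen p + gen q := by
  unfold gen
  rw [← Finset.sum_add_distrib]
  refine Finset.sum_congr rfl fun T _ => ?_
  by_cases hp : p T <;> by_cases hq : q T <;> simp_all [h T]

lemma sum_prod_pred {k : ℕ} {W : Type*} [Fintype W] (p : Finset W → Prop) :
    (∑ f : Fin k → Finset W,
      if ∀ i, p (f i) then (X : Polynomial ℤ) ^ (∑ i, (f i).card) else 0) = (gen p) ^ k := by
  have key : ∀ f : Fin k → Finset W,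
      (if ∀ i, p (f i) then (X : Polynomial ℤ) ^ (∑ i, (f i).card) else 0)
      = ∏ i, (if p (f i) then (X : Polynomial ℤ) ^ (f i).card else 0) := by
    intro f
    rw [Fintype.prod_ite_zero]
    congr 1
    rw [← Finset.prod_pow_eq_pow_sum]
  rw [Finset.sum_congr rfl fun f _ => key f]
  have h2 := Finset.prod_univ_sum (fun _ : Fin k => (Finset.univ : Finset (Finset W)))
      (fun _ T => if p T then (X : Polynomial ℤ) ^ T.card else 0)
  rw [Fintype.piFinset_univ] at h2
  rw [← h2, gen, Finset.prod_const, Finset.card_univ, Fintype.card_fin]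

section Preds
variable {W : Type*} [Fintype W] (GW : SimpleGraph W) (ρ : W)

lemma gen_Dout :
    gen (fun T : Finset W => ∀ w, w ≠ ρ → (w ∈ T ∨ ∃ u ∈ T, GW.Adj u w)) =
      stateA GW ρ + stateB GW ρ + stateC GW ρ := by
  have hiff : ∀ T : Finset W,
      (∀ w, w ≠ ρ → (w ∈ T ∨ ∃ u ∈ T, GW.Adj u w)) ↔
      ((ρ ∈ T ∧ ∀ v, v ∈ T ∨ ∃ u ∈ T, GW.Adj u v) ∨
       ((ρ ∉ T ∧ (∃ u ∈ T, GW.Adj u ρ) ∧ ∀ v, v ≠ ρ → (v ∈ T ∨ ∃ u ∈ T, GW.Adj u v)) ∨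
        (ρ ∉ T ∧ (¬∃ u ∈ T, GW.Adj u ρ) ∧ ∀ v, v ≠ ρ → (v ∈ T ∨ ∃ u ∈ T, GW.Adj u v)))) := by
    intro T
    constructor
    · intro h
      by_cases hρ : ρ ∈ T
      · exact Or.inl ⟨hρ, fun v => if hv : v = ρ then Or.inl (hv ▸ hρ) else
          (h v hv).imp id id⟩
      · by_cases hex : ∃ u ∈ T, GW.Adj u ρ
        · exact Or.inr (Or.inl ⟨hρ, hex, h⟩)
        · exact Or.inr (Or.inr ⟨hρ, hex, h⟩)
    · rintro (⟨hρ, h⟩ | ⟨_, _, h⟩ | ⟨_, _, h⟩)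
      · exact fun w _ => h w
      · exact h
      · exact h
  rw [gen_congr hiff, gen_or, gen_or, stateA_eq, stateB_eq, stateC_eq, add_assoc]
  · intro T h
    exact h.2.2.1 h.1.2.1
  · intro T h
    rcases h.2 with ⟨hB, _⟩ | ⟨hC, _⟩
    · exact hB h.1.1
    · exact hC h.1.1

lemma gen_Din :
    gen (fun T : Finset W => ∀ w, w ∈ T ∨ ∃ u ∈ T, GW.Adj u w) =
      stateA GW ρ + stateB GW ρ := by
  have hiff : ∀ T : Finset W,
      (∀ w, w ∈ T ∨ ∃ u ∈ T, GW.Adj u w) ↔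
      ((ρ ∈ T ∧ ∀ v, v ∈ T ∨ ∃ u ∈ T, GW.Adj u v) ∨
       (ρ ∉ T ∧ (∃ u ∈ T, GW.Adj u ρ) ∧ ∀ v, v ≠ ρ → (v ∈ T ∨ ∃ u ∈ T, GW.Adj u v))) := by
    intro T
    constructor
    · intro h
      by_cases hρ : ρ ∈ T
      · exact Or.inl ⟨hρ, h⟩
      · rcases h ρ with hm | hex
        · exact absurd hm hρ
        · exact Or.inr ⟨hρ, hex, fun v _ => h v⟩
    · rintro (⟨hρ, h⟩ | ⟨hρ, hex, h⟩)
      · exact h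
      · exact fun w => if hw : w = ρ then Or.inr (hw ▸ hex) else h w hw
  rw [gen_congr hiff, gen_or, stateA_eq, stateB_eq]
  intro T h
  exact h.2.1 h.1.1

lemma gen_DinNot :
    gen (fun T : Finset W => (∀ w, w ∈ T ∨ ∃ u ∈ T, GW.Adj u w) ∧ ρ ∉ T) =
      stateB GW ρ := by
  have hiff : ∀ T : Finset W,
      ((∀ w, w ∈ T ∨ ∃ u ∈ T, GW.Adj u w) ∧ ρ ∉ T) ↔
      (ρ ∉ T ∧ (∃ u ∈ T, GW.Adj u ρ) ∧ ∀ v, v ≠ ρ → (v ∈ T ∨ ∃ u ∈ T, GW.Adj u v)) := by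
    intro T
    constructor
    · rintro ⟨h, hρ⟩
      rcases h ρ with hm | hex
      · exact absurd hm hρ
      · exact ⟨hρ, hex, fun v _ => h v⟩
    · rintro ⟨hρ, hex, h⟩
      exact ⟨fun w => if hw : w = ρ then Or.inr (hw ▸ hex) else h w hw, hρ⟩
  rw [gen_congr hiff, stateB_eq]

end Preds

section Glue
variable {k : ℕ} {W : Type*} [Fintype W] [DecidableEq W]

def GRel (k : ℕ) {W : Type*} (GW : SimpleGraph W) (ρ : W) (x y : Unit ⊕ (Fin k × W)) : Prop :=
  (∃ i : Fin k, x = Sum.inl () ∧ y = Sum.inr (i, ρ)) ∨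
  (∃ (i : Fin k) (p q : W), GW.Adj p q ∧ x = Sum.inr (i, p) ∧ y = Sum.inr (i, q))

def Glue (k : ℕ) {W : Type*} (GW : SimpleGraph W) (ρ : W) :
    SimpleGraph (Unit ⊕ (Fin k × W)) := SimpleGraph.fromRel (GRel k GW ρ)

set_option linter.unusedSectionVars false

lemma glue_adj_root (GW : SimpleGraph W) (ρ : W) (u : Unit ⊕ (Fin k × W)) :
    (Glue k GW ρ).Adj u (Sum.inl ()) ↔ ∃ i, u = Sum.inr (i, ρ) := by
  constructor
  · rintro ⟨hne, h | h⟩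
    · rcases h with ⟨i, rfl, h⟩ | ⟨i, p, q, hpq, rfl, h⟩ <;> simp_all
    · rcases h with ⟨i, h, rfl⟩ | ⟨i, p, q, hpq, h, rfl⟩
      · exact ⟨i, rfl⟩
      · simp_all
  · rintro ⟨i, rfl⟩
    exact ⟨by simp, Or.inr (Or.inl ⟨i, rfl, rfl⟩)⟩

lemma glue_adj_inr (GW : SimpleGraph W) (ρ : W) (u : Unit ⊕ (Fin k × W)) (i : Fin k) (w : W) :
    (Glue k GW ρ).Adj u (Sum.inr (i, w)) ↔
      (u = Sum.inl () ∧ w = ρ) ∨ ∃ v, GW.Adj v w ∧ u = Sum.inr (i, v) := by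
  constructor
  · rintro ⟨hne, h | h⟩
    · rcases h with ⟨j, rfl, h⟩ | ⟨j, p, q, hpq, rfl, h⟩
      · simp only [Sum.inr.injEq, Prod.mk.injEq] at h
        exact Or.inl ⟨rfl, h.2⟩
      · simp only [Sum.inr.injEq, Prod.mk.injEq] at h
        exact Or.inr ⟨p, h.2 ▸ hpq, by rw [h.1]⟩
    · rcases h with ⟨j, h, rfl⟩ | ⟨j, p, q, hpq, h, rfl⟩
      · simp at h
      · simp only [Sum.inr.injEq, Prod.mk.injEq] at h
        exact Or.inr ⟨q, h.2 ▸ hpq.symm, by rw [h.1]⟩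
  · rintro (⟨rfl, rfl⟩ | ⟨v, hadj, rfl⟩)
    · exact ⟨by simp, Or.inl (Or.inl ⟨i, rfl, rfl⟩)⟩
    · exact ⟨by simp [hadj.ne], Or.inl (Or.inr ⟨i, v, w, hadj, rfl, rfl⟩)⟩

def recomb (b : Bool) (f : Fin k → Finset W) : Finset (Unit ⊕ (Fin k × W)) :=
  (if b then {Sum.inl ()} else ∅) ∪
    Finset.univ.biUnion fun i => (f i).map ⟨fun w => Sum.inr (i, w), fun a b h => by simpa using h⟩

lemma mem_recomb_inl (b : Bool) (f : Fin k → Finset W) :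
    Sum.inl () ∈ recomb b f ↔ b = true := by
  cases b <;> simp [recomb]

lemma mem_recomb_inr (b : Bool) (f : Fin k → Finset W) (i : Fin k) (w : W) :
    Sum.inr (i, w) ∈ recomb b f ↔ w ∈ f i := by
  cases b <;> simp [recomb] <;>
    exact ⟨fun ⟨a, c, hc, h⟩ => by
      obtain ⟨rfl, rfl⟩ := Prod.mk.inj (Sum.inr.inj h); exact hc, fun h => ⟨i, w, h, rfl⟩⟩

lemma card_recomb (b : Bool) (f : Fin k → Finset W) :
    (recomb b f).card = (if b then 1 else 0) + ∑ i, (f i).card := by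
  rw [recomb, Finset.card_union_of_disjoint, Finset.card_biUnion]
  · congr 1
    · cases b <;> simp
    · exact Finset.sum_congr rfl fun i _ => Finset.card_map _
  · intro i _ j _ hij
    simp only [Finset.disjoint_left, Finset.mem_map]
    rintro x ⟨v, hv, rfl⟩ ⟨v', hv', h⟩
    change Sum.inr (j, v') = Sum.inr (i, v) at h
    simp only [Sum.inr.injEq, Prod.mk.injEq] at h
    exact hij h.1.symm
  · cases b <;> simp [Finset.disjoint_left]

lemma recomb_bijective :
    Function.Bijective (fun p : Bool × (Fin k → Finset W) => recomb p.1 p.2) := by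
  constructor
  · rintro ⟨b, f⟩ ⟨b', f'⟩ h
    simp only at h
    simp only [Prod.mk.injEq]
    constructor
    · have := (mem_recomb_inl b f).symm.trans (h ▸ mem_recomb_inl b' f')
      cases b <;> cases b' <;> simp_all
    · funext i; ext w
      rw [← mem_recomb_inr b f, h, mem_recomb_inr]
  · intro S
    refine ⟨⟨decide (Sum.inl () ∈ S), fun i =>
      S.preimage (fun w => Sum.inr (i, w)) (fun a _ b _ h => by simpa using h)⟩, ?_⟩
    ext x
    rcases x with ⟨⟩ | ⟨i, w⟩
    · rw [mem_recomb_inl]; simp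
    · rw [mem_recomb_inr]
      exact Finset.mem_preimage (hf := fun a _ b _ h => by simpa using h)

variable (GW : SimpleGraph W) (ρ : W)

lemma condA_glue (b : Bool) (f : Fin k → Finset W) :
    (Sum.inl () ∈ recomb b f ∧
      ∀ v, v ∈ recomb b f ∨ ∃ u ∈ recomb b f, (Glue k GW ρ).Adj u v) ↔
    (b = true ∧ ∀ i, ∀ w, w ≠ ρ → (w ∈ f i ∨ ∃ u ∈ f i, GW.Adj u w)) := by
  rw [mem_recomb_inl]
  constructor
  · rintro ⟨hb, h⟩
    refine ⟨hb, fun i w hw => ?_⟩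
    rcases h (Sum.inr (i, w)) with hm | ⟨u, hu, hadj⟩
    · exact Or.inl ((mem_recomb_inr _ _ _ _).1 hm)
    · rw [glue_adj_inr] at hadj
      rcases hadj with ⟨rfl, rfl⟩ | ⟨v, hvw, rfl⟩
      · exact absurd rfl hw
      · exact Or.inr ⟨v, (mem_recomb_inr _ _ _ _).1 hu, hvw⟩
  · rintro ⟨hb, h⟩
    refine ⟨hb, fun v => ?_⟩
    rcases v with ⟨⟩ | ⟨i, w⟩
    · exact Or.inl ((mem_recomb_inl _ _).2 hb)
    · by_cases hw : w = ρ
      · subst hw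
        exact Or.inr ⟨Sum.inl (), (mem_recomb_inl _ _).2 hb,
          (glue_adj_inr _ _ _ _ _).2 (Or.inl ⟨rfl, rfl⟩)⟩
      · rcases h i w hw with hm | ⟨u, hu, hadj⟩
        · exact Or.inl ((mem_recomb_inr _ _ _ _).2 hm)
        · exact Or.inr ⟨Sum.inr (i, u), (mem_recomb_inr _ _ _ _).2 hu,
            (glue_adj_inr _ _ _ _ _).2 (Or.inr ⟨u, hadj, rfl⟩)⟩

lemma dom_out_glue (f : Fin k → Finset W)
    (hroot : Sum.inl () ∉ recomb false f) :
    (∀ v, v ≠ Sum.inl () → (v ∈ recomb (k := k) false f ∨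
        ∃ u ∈ recomb false f, (Glue k GW ρ).Adj u v)) ↔
    (∀ i, ∀ w, w ∈ f i ∨ ∃ u ∈ f i, GW.Adj u w) := by
  constructor
  · intro h i w
    rcases h (Sum.inr (i, w)) (by simp) with hm | ⟨u, hu, hadj⟩
    · exact Or.inl ((mem_recomb_inr _ _ _ _).1 hm)
    · rw [glue_adj_inr] at hadj
      rcases hadj with ⟨rfl, rfl⟩ | ⟨v, hvw, rfl⟩
      · exact absurd hu hroot
      · exact Or.inr ⟨v, (mem_recomb_inr _ _ _ _).1 hu, hvw⟩
  · intro h v hv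
    rcases v with ⟨⟩ | ⟨i, w⟩
    · exact absurd rfl hv
    · rcases h i w with hm | ⟨u, hu, hadj⟩
      · exact Or.inl ((mem_recomb_inr _ _ _ _).2 hm)
      · exact Or.inr ⟨Sum.inr (i, u), (mem_recomb_inr _ _ _ _).2 hu,
          (glue_adj_inr _ _ _ _ _).2 (Or.inr ⟨u, hadj, rfl⟩)⟩

lemma exists_adj_root_glue (b : Bool) (f : Fin k → Finset W) :
    (∃ u ∈ recomb b f, (Glue k GW ρ).Adj u (Sum.inl ())) ↔ ∃ i, ρ ∈ f i := by
  constructor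
  · rintro ⟨u, hu, hadj⟩
    rw [glue_adj_root] at hadj
    obtain ⟨i, rfl⟩ := hadj
    exact ⟨i, (mem_recomb_inr _ _ _ _).1 hu⟩
  · rintro ⟨i, hi⟩
    exact ⟨Sum.inr (i, ρ), (mem_recomb_inr _ _ _ _).2 hi,
      (glue_adj_root _ _ _).2 ⟨i, rfl⟩⟩

lemma condB_glue (b : Bool) (f : Fin k → Finset W) :
    (Sum.inl () ∉ recomb b f ∧ (∃ u ∈ recomb b f, (Glue k GW ρ).Adj u (Sum.inl ())) ∧
      ∀ v, v ≠ Sum.inl () → (v ∈ recomb b f ∨ ∃ u ∈ recomb b f, (Glue k GW ρ).Adj u v)) ↔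
    (b = false ∧ (∃ i, ρ ∈ f i) ∧ ∀ i, ∀ w, w ∈ f i ∨ ∃ u ∈ f i, GW.Adj u w) := by
  constructor
  · rintro ⟨hroot, hex, hdom⟩
    have hb : b = false := by
      cases b
      · rfl
      · exact absurd ((mem_recomb_inl _ _).2 rfl) hroot
    subst hb
    exact ⟨rfl, (exists_adj_root_glue GW ρ _ _).1 hex,
      (dom_out_glue GW ρ f hroot).1 hdom⟩
  · rintro ⟨rfl, hex, hdom⟩
    have hroot : Sum.inl () ∉ recomb (k := k) false f := by
      rw [mem_recomb_inl]; simp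
    exact ⟨hroot, (exists_adj_root_glue GW ρ _ _).2 hex,
      (dom_out_glue GW ρ f hroot).2 hdom⟩

lemma condC_glue (b : Bool) (f : Fin k → Finset W) :
    (Sum.inl () ∉ recomb b f ∧ (¬∃ u ∈ recomb b f, (Glue k GW ρ).Adj u (Sum.inl ())) ∧
      ∀ v, v ≠ Sum.inl () → (v ∈ recomb b f ∨ ∃ u ∈ recomb b f, (Glue k GW ρ).Adj u v)) ↔
    (b = false ∧ ∀ i, (∀ w, w ∈ f i ∨ ∃ u ∈ f i, GW.Adj u w) ∧ ρ ∉ f i) := by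
  constructor
  · rintro ⟨hroot, hnex, hdom⟩
    have hb : b = false := by
      cases b
      · rfl
      · exact absurd ((mem_recomb_inl _ _).2 rfl) hroot
    subst hb
    rw [exists_adj_root_glue] at hnex
    push_neg at hnex
    exact ⟨rfl, fun i => ⟨(dom_out_glue GW ρ f hroot).1 hdom i, hnex i⟩⟩
  · rintro ⟨rfl, h⟩
    have hroot : Sum.inl () ∉ recomb (k := k) false f := by
      rw [mem_recomb_inl]; simp
    refine ⟨hroot, ?_, (dom_out_glue GW ρ f hroot).2 fun i => (h i).1⟩
    rw [exists_adj_root_glue]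
    push_neg
    exact fun i => (h i).2

lemma sum_recomb (G : Finset (Unit ⊕ (Fin k × W)) → Polynomial ℤ) :
    (∑ S : Finset (Unit ⊕ (Fin k × W)), G S)
      = (∑ f : Fin k → Finset W, G (recomb true f))
        + (∑ f : Fin k → Finset W, G (recomb false f)) := by
  rw [← (Fintype.sum_bijective _ recomb_bijective
      (fun p : Bool × (Fin k → Finset W) => G (recomb p.1 p.2)) G (fun p => rfl)),
    Fintype.sum_prod_type, Fintype.sum_bool]

lemma stateA_glue :
    stateA (Glue k GW ρ) (Sum.inl ()) =
      X * (stateA GW ρ + stateB GW ρ + stateC GW ρ) ^ k := by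
  rw [stateA_eq, gen, sum_recomb, ← gen_Dout GW ρ, ← sum_prod_pred, Finset.mul_sum]
  simp only [condA_glue, card_recomb, Bool.false_eq_true, false_and, if_false,
    Finset.sum_const_zero, add_zero, true_and, if_true]
  refine Finset.sum_congr rfl fun f _ => ?_
  by_cases h : ∀ i, ∀ w, w ≠ ρ → (w ∈ f i ∨ ∃ u ∈ f i, GW.Adj u w)
  · simp [h, pow_add]
  · simp [h]

lemma stateC_glue :
    stateC (Glue k GW ρ) (Sum.inl ()) = (stateB GW ρ) ^ k := by
  rw [stateC_eq, gen, sum_recomb, ← gen_DinNot GW ρ, ← sum_prod_pred]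
  simp only [condC_glue, card_recomb, Bool.true_eq_false, false_and, if_false,
    Finset.sum_const_zero, zero_add, true_and, if_true]
  refine Finset.sum_congr rfl fun f _ => ?_
  by_cases h : ∀ i, (∀ w, w ∈ f i ∨ ∃ u ∈ f i, GW.Adj u w) ∧ ρ ∉ f i
  · simp [h]
  · simp [h]

lemma stateB_glue :
    stateB (Glue k GW ρ) (Sum.inl ()) =
      (stateA GW ρ + stateB GW ρ) ^ k - (stateB GW ρ) ^ k := by
  rw [stateB_eq, gen, sum_recomb, ← gen_Din GW ρ, ← gen_DinNot GW ρ, ← sum_prod_pred,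
    ← sum_prod_pred, ← Finset.sum_sub_distrib]
  simp only [condB_glue, card_recomb, Bool.true_eq_false, false_and, if_false,
    Finset.sum_const_zero, zero_add, true_and, if_true]
  refine Finset.sum_congr rfl fun f _ => ?_
  by_cases hD : ∀ i, ∀ w, w ∈ f i ∨ ∃ u ∈ f i, GW.Adj u w
  · by_cases hE : ∃ i, ρ ∈ f i
    · rw [if_pos (⟨hE, hD⟩ : (∃ i, ρ ∈ f i) ∧ _), if_pos hD,
        if_neg (show ¬∀ i, (∀ w, w ∈ f i ∨ ∃ u ∈ f i, GW.Adj u w) ∧ ρ ∉ f i from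
          fun hc => hE.elim fun i hi => (hc i).2 hi), sub_zero]
      simp
    · rw [if_neg (show ¬((∃ i, ρ ∈ f i) ∧ ∀ i, ∀ w, w ∈ f i ∨ ∃ u ∈ f i, GW.Adj u w) from
          fun hc => hE hc.1), if_pos hD,
        if_pos (show ∀ i, (∀ w, w ∈ f i ∨ ∃ u ∈ f i, GW.Adj u w) ∧ ρ ∉ f i from
          fun i => ⟨hD i, fun hi => hE ⟨i, hi⟩⟩), sub_self]
  · rw [if_neg (show ¬((∃ i, ρ ∈ f i) ∧ ∀ i, ∀ w, w ∈ f i ∨ ∃ u ∈ f i, GW.Adj u w) from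
        fun hc => hD hc.2), if_neg hD,
      if_neg (show ¬∀ i, (∀ w, w ∈ f i ∨ ∃ u ∈ f i, GW.Adj u w) ∧ ρ ∉ f i from
        fun hc => hD fun i => (hc i).1), sub_zero]

end Glue

def P3 : SimpleGraph (Fin 3) := SimpleGraph.fromRel (fun a b => a.val + 1 = b.val)

instance : DecidableRel P3.Adj := fun a b =>
  decidable_of_iff (a ≠ b ∧ (a.val + 1 = b.val ∨ b.val + 1 = a.val))
    (by rw [P3, SimpleGraph.fromRel_adj])

lemma path_eq_P3 : SimpleGraph.pathGraph 3 = P3 := by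
  ext a b
  rw [SimpleGraph.pathGraph_adj, P3, SimpleGraph.fromRel_adj, Fin.ne_iff_vne]
  omega

lemma stateA_P3 : stateA P3 0 = 2 * X ^ 2 + X ^ 3 := by
  rw [stateA, show Fintype.card (Fin 3) = 3 from rfl, Finset.sum_range_succ,
    Finset.sum_range_succ, Finset.sum_range_succ, Finset.sum_range_succ, Finset.sum_range_zero]
  rw [show Nat.card {S : Finset (Fin 3) // S.card = 0 ∧ 0 ∈ S ∧
      ∀ v, v ∈ S ∨ ∃ u ∈ S, P3.Adj u v} = 0 from by
      rw [Nat.card_eq_fintype_card]; decide,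
    show Nat.card {S : Finset (Fin 3) // S.card = 1 ∧ 0 ∈ S ∧
      ∀ v, v ∈ S ∨ ∃ u ∈ S, P3.Adj u v} = 0 from by
      rw [Nat.card_eq_fintype_card]; decide,
    show Nat.card {S : Finset (Fin 3) // S.card = 2 ∧ 0 ∈ S ∧
      ∀ v, v ∈ S ∨ ∃ u ∈ S, P3.Adj u v} = 2 from by
      rw [Nat.card_eq_fintype_card]; decide,
    show Nat.card {S : Finset (Fin 3) // S.card = 3 ∧ 0 ∈ S ∧
      ∀ v, v ∈ S ∨ ∃ u ∈ S, P3.Adj u v} = 1 from by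
      rw [Nat.card_eq_fintype_card]; decide]
  push_cast
  ring

lemma stateB_P3 : stateB P3 0 = X + X ^ 2 := by
  rw [stateB, show Fintype.card (Fin 3) = 3 from rfl, Finset.sum_range_succ,
    Finset.sum_range_succ, Finset.sum_range_succ, Finset.sum_range_succ, Finset.sum_range_zero]
  rw [show Nat.card {S : Finset (Fin 3) // S.card = 0 ∧ 0 ∉ S ∧ (∃ u ∈ S, P3.Adj u 0) ∧
      ∀ v, v ≠ 0 → (v ∈ S ∨ ∃ u ∈ S, P3.Adj u v)} = 0 from by
      rw [Nat.card_eq_fintype_card]; decide,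
    show Nat.card {S : Finset (Fin 3) // S.card = 1 ∧ 0 ∉ S ∧ (∃ u ∈ S, P3.Adj u 0) ∧
      ∀ v, v ≠ 0 → (v ∈ S ∨ ∃ u ∈ S, P3.Adj u v)} = 1 from by
      rw [Nat.card_eq_fintype_card]; decide,
    show Nat.card {S : Finset (Fin 3) // S.card = 2 ∧ 0 ∉ S ∧ (∃ u ∈ S, P3.Adj u 0) ∧
      ∀ v, v ≠ 0 → (v ∈ S ∨ ∃ u ∈ S, P3.Adj u v)} = 1 from by
      rw [Nat.card_eq_fintype_card]; decide,
    show Nat.card {S : Finset (Fin 3) // S.card = 3 ∧ 0 ∉ S ∧ (∃ u ∈ S, P3.Adj u 0) ∧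
      ∀ v, v ≠ 0 → (v ∈ S ∨ ∃ u ∈ S, P3.Adj u v)} = 0 from by
      rw [Nat.card_eq_fintype_card]; decide]
  push_cast
  ring

lemma stateC_P3 : stateC P3 0 = X := by
  rw [stateC, show Fintype.card (Fin 3) = 3 from rfl, Finset.sum_range_succ,
    Finset.sum_range_succ, Finset.sum_range_succ, Finset.sum_range_succ, Finset.sum_range_zero]
  rw [show Nat.card {S : Finset (Fin 3) // S.card = 0 ∧ 0 ∉ S ∧ (¬∃ u ∈ S, P3.Adj u 0) ∧
      ∀ v, v ≠ 0 → (v ∈ S ∨ ∃ u ∈ S, P3.Adj u v)} = 0 from by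
      rw [Nat.card_eq_fintype_card]; decide,
    show Nat.card {S : Finset (Fin 3) // S.card = 1 ∧ 0 ∉ S ∧ (¬∃ u ∈ S, P3.Adj u 0) ∧
      ∀ v, v ≠ 0 → (v ∈ S ∨ ∃ u ∈ S, P3.Adj u v)} = 1 from by
      rw [Nat.card_eq_fintype_card]; decide,
    show Nat.card {S : Finset (Fin 3) // S.card = 2 ∧ 0 ∉ S ∧ (¬∃ u ∈ S, P3.Adj u 0) ∧
      ∀ v, v ≠ 0 → (v ∈ S ∨ ∃ u ∈ S, P3.Adj u v)} = 0 from by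
      rw [Nat.card_eq_fintype_card]; decide,
    show Nat.card {S : Finset (Fin 3) // S.card = 3 ∧ 0 ∉ S ∧ (¬∃ u ∈ S, P3.Adj u 0) ∧
      ∀ v, v ≠ 0 → (v ∈ S ∨ ∃ u ∈ S, P3.Adj u v)} = 0 from by
      rw [Nat.card_eq_fintype_card]; decide]
  push_cast
  ring

end AuxState

open scoped Classical in
lemma X_mul_Rpoly (t : ℕ) : X * Rpoly t = Ppoly t - (1 + X) ^ t := by
  have hdvd : (X : Polynomial ℤ) ∣ (Ppoly t - (1 + X) ^ t) := by
    rw [Polynomial.X_dvd_iff, Polynomial.coeff_sub, Polynomial.coeff_zero_eq_eval_zero,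
      Polynomial.coeff_zero_eq_eval_zero]
    simp [Ppoly]
  have h := Polynomial.modByMonic_add_div (Ppoly t - (1 + X) ^ t)
    X
  rw [(Polynomial.modByMonic_eq_zero_iff_dvd Polynomial.monic_X).2 hdvd, zero_add] at h
  rw [Rpoly]
  exact h

lemma stateF_A (t : ℕ) : stateA (Ftree t) (Sum.inl ()) = X ^ (t + 1) * Qpoly t := by
  have h : stateA (Ftree t) (Sum.inl ()) =
      X * (stateA (SimpleGraph.pathGraph 3) 0 + stateB (SimpleGraph.pathGraph 3) 0 +
        stateC (SimpleGraph.pathGraph 3) 0) ^ t :=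
    stateA_glue (SimpleGraph.pathGraph 3) (0 : Fin 3)
  rw [h, path_eq_P3, stateA_P3, stateB_P3, stateC_P3,
    show ((2*X^2+X^3) + (X+X^2) + X : Polynomial ℤ) = X * (2+3*X+X^2) from by ring,
    mul_pow, Qpoly]
  ring

lemma stateF_B (t : ℕ) : stateB (Ftree t) (Sum.inl ()) = X ^ (t + 1) * Rpoly t := by
  have h : stateB (Ftree t) (Sum.inl ()) =
      (stateA (SimpleGraph.pathGraph 3) 0 + stateB (SimpleGraph.pathGraph 3) 0) ^ t -
        (stateB (SimpleGraph.pathGraph 3) 0) ^ t :=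
    stateB_glue (SimpleGraph.pathGraph 3) (0 : Fin 3)
  rw [h, path_eq_P3, stateA_P3, stateB_P3,
    show ((2*X^2+X^3) + (X+X^2) : Polynomial ℤ) = X * (1+3*X+X^2) from by ring,
    show (X+X^2 : Polynomial ℤ) = X * (1+X) from by ring,
    mul_pow, mul_pow, ← Ppoly]
  linear_combination (-(X : Polynomial ℤ) ^ t) * X_mul_Rpoly t

lemma stateF_C (t : ℕ) : stateC (Ftree t) (Sum.inl ()) = X ^ t * (1 + X) ^ t := by
  have h : stateC (Ftree t) (Sum.inl ()) = (stateB (SimpleGraph.pathGraph 3) 0) ^ t :=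
    stateC_glue (SimpleGraph.pathGraph 3) (0 : Fin 3)
  rw [h, path_eq_P3, stateB_P3,
    show (X+X^2 : Polynomial ℤ) = X * (1+X) from by ring, mul_pow]

/-- For the rooted tree `H_t` (a root with three children, each the root of a copy of
`F_t`): `𝒜 = x^{3t+1} U_t`, `ℬ = x^{3t+3} V_t` and `𝒞 = x^{3t+3} R_t^3`. -/
theorem state_polys_Htree (t : ℕ) (ht : 1 ≤ t) :
    stateA (Htree t) (Sum.inl ()) = X ^ (3 * t + 1) * Upoly t ∧
    stateB (Htree t) (Sum.inl ()) = X ^ (3 * t + 3) * Vpoly t ∧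
    stateC (Htree t) (Sum.inl ()) = X ^ (3 * t + 3) * Rpoly t ^ 3 := by
  letI : DecidableEq (FVert t) := Classical.decEq _
  have hXR := X_mul_Rpoly t
  have hA : stateA (Htree t) (Sum.inl ()) =
      X * (stateA (Ftree t) (Sum.inl ()) + stateB (Ftree t) (Sum.inl ()) +
        stateC (Ftree t) (Sum.inl ())) ^ 3 := stateA_glue (Ftree t) (Sum.inl ())
  have hB : stateB (Htree t) (Sum.inl ()) =
      (stateA (Ftree t) (Sum.inl ()) + stateB (Ftree t) (Sum.inl ())) ^ 3 -
        (stateB (Ftree t) (Sum.inl ())) ^ 3 := stateB_glue (Ftree t) (Sum.inl ())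
  have hC : stateC (Htree t) (Sum.inl ()) =
      (stateB (Ftree t) (Sum.inl ())) ^ 3 := stateC_glue (Ftree t) (Sum.inl ())
  refine ⟨?_, ?_, ?_⟩
  · rw [hA, stateF_A, stateF_B, stateF_C, Upoly]
    have key : (X ^ (t+1) * Qpoly t + X ^ (t+1) * Rpoly t + X ^ t * (1+X) ^ t : Polynomial ℤ)
        = X ^ t * (Ppoly t + X * Qpoly t) := by
      linear_combination (X : Polynomial ℤ) ^ t * hXR
    rw [key, mul_pow]
    ring
  · rw [hB, stateF_A, stateF_B, Vpoly]
    ring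
  · rw [hC, stateF_B]
    ring
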